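/- Binet-type formula for q-Chebyshev polynomials of the second kind: U_n(x,s,q) = ∑_{k=0}^{⌊(n+1)/2⌋} q^{\binom{n-2k}{2}}·[n+1 choose 2k+1]_q·x^{n-2k}·∏_{j=0}^{k-1}(x² + q^{2j+1}s), where U_n is defined by U_0 = 1, U_1 = (1+q)x, U_n = (1+q^n)x·U_{n-1} + q^{n-1}s·U_{n-2}. -/

import Mathlib

open Finset

noncomputable section

/-- The polynomial ring `ℤ[q,x,s]`. -/
abbrev R : Type := MvPolynomial (Fin 3) ℤ

def q : R := MvPolynomial.X 0
def x : R := MvPolynomial.X 1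
def s : R := MvPolynomial.X 2

/-- q-Chebyshev polynomials of the first kind:
`T 0 = 1`, `T 1 = x`, `T n = (1+q^(n-1)) x T (n-1) + q^(n-1) s T (n-2)`. -/
def chebT : ℕ → R
  | 0 => 1
  | 1 => x
  | (n + 2) => (1 + q ^ (n + 1)) * x * chebT (n + 1) + q ^ (n + 1) * s * chebT n

/-- q-Chebyshev polynomials of the second kind:
`U 0 = 1`, `U 1 = (1+q)x`, `U n = (1+q^n) x U (n-1) + q^(n-1) s U (n-2)`. -/
def chebU : ℕ → R
  | 0 => 1
  | 1 => (1 + q) * x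
  | (n + 2) => (1 + q ^ (n + 2)) * x * chebU (n + 1) + q ^ (n + 1) * s * chebU n

/-- The Gaussian binomial coefficient `[n choose k]_q` as a polynomial in `q`,
via the Pascal recursion `[n+1, k+1] = [n, k+1] + q^(n-k) [n, k]`. -/
def gbinom : ℕ → ℕ → R
  | _, 0 => 1
  | 0, _ + 1 => 0
  | (n + 1), (k + 1) => gbinom n (k + 1) + q ^ (n - k) * gbinom n k

lemma gbinom_succ (n k : ℕ) : gbinom (n+1) (k+1) = gbinom n (k+1) + q ^ (n-k) * gbinom n k := rfl

lemma gbinom_zero : ∀ n k : ℕ, n < k → gbinom n k = 0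
  | n, 0, h => absurd h (by omega)
  | 0, k+1, _ => rfl
  | n+1, k+1, h => by
    rw [gbinom_succ, gbinom_zero n (k+1) (by omega), gbinom_zero n k (by omega)]
    ring

lemma gbinom_self : ∀ n : ℕ, gbinom n n = 1
  | 0 => rfl
  | n+1 => by
    rw [gbinom_succ, gbinom_zero n (n+1) (by omega), gbinom_self n]
    simp

lemma gbinom_absorb : ∀ N K : ℕ, (q^(K+1) - 1) * gbinom N (K+1) = (q^(N-K) - 1) * gbinom N K
  | 0, 0 => by simp [gbinom]
  | 0, K+1 => by simp [gbinom]
  | N+1, 0 => by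
    have ih := gbinom_absorb N 0
    rw [gbinom_succ]
    simp only [Nat.sub_zero, gbinom] at *
    linear_combination ih
  | N+1, K+1 => by
    rcases le_or_gt (K+1) N with h | h
    · obtain ⟨d, rfl⟩ : ∃ d, N = K+1+d := ⟨N - (K+1), by omega⟩
      have ih1 := gbinom_absorb (K+1+d) (K+1)
      have ih2 := gbinom_absorb (K+1+d) K
      rw [show K+1+d-(K+1) = d by omega] at ih1
      rw [show K+1+d-K = d+1 by omega] at ih2
      rw [gbinom_succ, gbinom_succ, show K+1+d-(K+1) = d by omega,
        show K+1+d-K = d+1 by omega, show K+1+d+1-(K+1) = d+1 by omega]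
      linear_combination ih1 + q^(d+1) * ih2
    · rcases eq_or_lt_of_le (by omega : N ≤ K) with rfl | h2
      · rw [show N+1-(N+1) = 0 by omega, gbinom_zero (N+1) (N+1+1) (by omega)]
        ring
      · rw [gbinom_zero (N+1) (K+1+1) (by omega), gbinom_zero (N+1) (K+1) (by omega)]
        ring


lemma gbinom_zero_right (n : ℕ) : gbinom n 0 = 1 := by cases n <;> rfl

lemma gbinom_succ_one (n : ℕ) : gbinom (n+1) 1 = gbinom n 1 + q^n := by
  have := gbinom_succ n 0
  rw [gbinom_zero_right, show n-0 = n by omega, mul_one] at this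
  exact this

lemma star0 (r : ℕ) : q^(r+1) * gbinom (r+3) 1 + gbinom (r+1) 1
    = (1 + q^(r+2)) * gbinom (r+2) 1 := by
  have L3 := gbinom_absorb (r+1) 0
  rw [show r+1-0 = r+1 by omega, gbinom_zero_right, mul_one] at L3
  norm_num at L3
  have e1 := gbinom_succ_one (r+1)
  have e2 := gbinom_succ_one (r+2)
  rw [show r+1+1 = r+2 by omega] at e1
  rw [show r+2+1 = r+3 by omega] at e2
  linear_combination q^(r+1) * e2 + (q^(r+1) - 1 - q^(r+2)) * e1 - q^(r+1) * L3

lemma star (c r : ℕ) :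
    q^(r+1) * gbinom (c+r+4) (c+2) + gbinom (c+r+2) (c+2)
    = (1 + q^(c+r+3)) * gbinom (c+r+3) (c+2) + q^(2*r+3) * gbinom (c+r+2) c := by
  have h3 : gbinom (c+r+4) (c+2) = gbinom (c+r+3) (c+2) + q^(r+2) * gbinom (c+r+3) (c+1) := by
    have := gbinom_succ (c+r+3) (c+1)
    rwa [show c+r+3+1 = c+r+4 by omega, show c+1+1 = c+2 by omega,
      show c+r+3-(c+1) = r+2 by omega] at this
  have h1 : gbinom (c+r+3) (c+2) = gbinom (c+r+2) (c+2) + q^(r+1) * gbinom (c+r+2) (c+1) := by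
    have := gbinom_succ (c+r+2) (c+1)
    rwa [show c+r+2+1 = c+r+3 by omega, show c+1+1 = c+2 by omega,
      show c+r+2-(c+1) = r+1 by omega] at this
  have h2 : gbinom (c+r+3) (c+1) = gbinom (c+r+2) (c+1) + q^(r+2) * gbinom (c+r+2) c := by
    have := gbinom_succ (c+r+2) c
    rwa [show c+r+2+1 = c+r+3 by omega, show c+r+2-c = r+2 by omega] at this
  have a1 := gbinom_absorb (c+r+2) (c+1)
  rw [show c+r+2-(c+1) = r+1 by omega, show c+1+1 = c+2 by omega] at a1
  have a2 := gbinom_absorb (c+r+2) c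
  rw [show c+r+2-c = r+2 by omega] at a2
  linear_combination q^(r+1)*h3 + (q^(r+1) - (1+q^(c+r+3)))*h1 + q^(2*r+3)*h2
    - q^(r+1)*a1 - q^(2*r+3)*a2

def Pk (k : ℕ) : R := ∏ j ∈ range k, (x^2 + q^(2*j+1)*s)

def t (n k : ℕ) : R :=
  q ^ Nat.choose (n - 2*k) 2 * gbinom (n+1) (2*k+1) * x ^ (n - 2*k) * Pk k

def aa (n : ℕ) : ℕ → R
  | 0 => 0
  | (k+1) => q ^ (Nat.choose (n - 2*k) 2 + (n - 2*k)) * gbinom (n+1) (2*k+1)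
      * x ^ (n - 2*k) * Pk (k+1)

def bb (n k : ℕ) : R :=
  q ^ (Nat.choose (n - 2*k) 2 + (n - 2*k)) * gbinom (n+1) (2*k+1)
    * x ^ ((n - 2*k)+2) * Pk k

lemma Pk_succ (k : ℕ) : Pk (k+1) = Pk k * (x^2 + q^(2*k+1)*s) := prod_range_succ _ k

lemma sAB (n k : ℕ) : q^(n+1) * s * t n k = aa n (k+1) - bb n k := by
  rcases le_or_gt (2*k) n with h | h
  · obtain ⟨r, rfl⟩ : ∃ r, n = 2*k+r := ⟨n - 2*k, by omega⟩
    simp only [t, aa, bb, show 2*k+r-2*k = r by omega, Pk_succ]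
    ring
  · simp only [t, aa, bb, gbinom_zero (n+1) (2*k+1) (by omega)]
    ring

lemma choose2 (m : ℕ) : Nat.choose (m+1) 2 = Nat.choose m 2 + m := by
  rw [Nat.choose_succ_succ, Nat.choose_one_right, Nat.add_comm]

lemma perk (n j : ℕ) :
    t (n+2) j + bb n j = (1 + q^(n+2)) * x * t (n+1) j + aa n j := by
  match j with
  | 0 =>
    simp only [t, aa, bb, Nat.mul_zero, Nat.sub_zero, Pk, range_zero, prod_empty]
    rw [show n+2+1 = n+3 by omega, show n+1+1 = n+2 by omega,
      show (0:ℕ)+1 = 1 by omega,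
      choose2 (n+1), choose2 n]
    linear_combination (q^(Nat.choose n 2 + n) * x^(n+2)) * star0 n
  | (j+1) =>
    rcases le_or_gt (2*(j+1)) n with h | h
    · obtain ⟨r, rfl⟩ : ∃ r, n = 2*j+2+r := ⟨n - (2*j+2), by omega⟩
      have hs := star (2*j+1) r
      rw [show 2*j+1+r+4 = 2*j+r+5 by omega, show 2*j+1+2 = 2*j+3 by omega,
        show 2*j+1+r+2 = 2*j+r+3 by omega, show 2*j+1+r+3 = 2*j+r+4 by omega] at hs
      simp only [t, aa, bb]
      rw [show 2*j+2+r+2 - 2*(j+1) = r+2 by omega,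
        show 2*j+2+r+1 - 2*(j+1) = r+1 by omega,
        show 2*j+2+r - 2*(j+1) = r by omega,
        show 2*j+2+r - 2*j = r+2 by omega,
        show 2*j+2+r+2+1 = 2*j+r+5 by omega,
        show 2*j+2+r+1+1 = 2*j+r+4 by omega,
        show 2*j+2+r+1 = 2*j+r+3 by omega,
        show 2*(j+1)+1 = 2*j+3 by omega,
        choose2 (r+1), choose2 r]
      linear_combination (q^(Nat.choose r 2 + r) * x^(r+2) * Pk (j+1)) * hs
    · rcases eq_or_lt_of_le (by omega : n+1 ≤ 2*(j+1)) with h1 | h1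
      · -- 2*(j+1) = n+1, n = 2j+1
        obtain rfl : n = 2*j+1 := by omega
        simp only [t, aa, bb]
        rw [show 2*j+1+2 - 2*(j+1) = 1 by omega,
          show 2*j+1+1 - 2*(j+1) = 0 by omega,
          show 2*j+1 - 2*(j+1) = 0 by omega,
          show 2*j+1 - 2*j = 1 by omega,
          show 2*j+1+2+1 = 2*j+4 by omega,
          show 2*j+1+1+1 = 2*j+3 by omega,
          show 2*j+1+1 = 2*j+2 by omega,
          show 2*(j+1)+1 = 2*j+3 by omega,
          gbinom_zero (2*j+2) (2*j+3) (by omega), gbinom_self (2*j+3),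
          show Nat.choose 1 2 = 0 from rfl, show Nat.choose 0 2 = 0 from rfl]
        have e1 : gbinom (2*j+4) (2*j+3) = gbinom (2*j+3) (2*j+3) + q^1 * gbinom (2*j+3) (2*j+2) := by
          have := gbinom_succ (2*j+3) (2*j+2)
          rwa [show 2*j+3+1 = 2*j+4 by omega, show 2*j+2+1 = 2*j+3 by omega,
            show 2*j+3-(2*j+2) = 1 by omega] at this
        have e2 : gbinom (2*j+3) (2*j+2) = gbinom (2*j+2) (2*j+2) + q^1 * gbinom (2*j+2) (2*j+1) := by
          have := gbinom_succ (2*j+2) (2*j+1)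
          rwa [show 2*j+2+1 = 2*j+3 by omega, show 2*j+1+1 = 2*j+2 by omega,
            show 2*j+2-(2*j+1) = 1 by omega] at this
        have sub1 := gbinom_absorb (2*j+2) (2*j+1)
        rw [show 2*j+1+1 = 2*j+2 by omega, show 2*j+2-(2*j+1) = 1 by omega,
          gbinom_self (2*j+2)] at sub1
        simp only [gbinom_self] at e1 e2
        linear_combination (x * Pk (j+1)) * (e1 + q*e2 - q*sub1)
      · rcases eq_or_lt_of_le (by omega : n+2 ≤ 2*(j+1)) with h2 | h2
        · -- 2*(j+1) = n+2, n = 2j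
          obtain rfl : n = 2*j := by omega
          simp only [t, aa, bb]
          rw [show 2*j+2 - 2*(j+1) = 0 by omega,
            show 2*j+1 - 2*(j+1) = 0 by omega,
            show 2*j - 2*(j+1) = 0 by omega,
            show 2*j - 2*j = 0 by omega,
            show 2*j+2+1 = 2*j+3 by omega,
            show 2*j+1+1 = 2*j+2 by omega,
            show 2*(j+1)+1 = 2*j+3 by omega,
            gbinom_self (2*j+3), gbinom_self (2*j+1),
            gbinom_zero (2*j+1) (2*j+3) (by omega),
            gbinom_zero (2*j+2) (2*j+3) (by omega)]
          ring
        · -- 2*(j+1) ≥ n+3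
          simp only [t, aa, bb,
            gbinom_zero (n+2+1) (2*(j+1)+1) (by omega),
            gbinom_zero (n+1+1) (2*(j+1)+1) (by omega),
            gbinom_zero (n+1) (2*(j+1)+1) (by omega),
            gbinom_zero (n+1) (2*j+1) (by omega)]
          ring

lemma t_zero (n k : ℕ) (h : n < 2*k) : t n k = 0 := by
  simp [t, gbinom_zero (n+1) (2*k+1) (by omega)]

lemma aa_zero (n k : ℕ) (h : n+2 < 2*k) : aa n k = 0 := by
  match k with
  | k+1 => simp [aa, gbinom_zero (n+1) (2*k+1) (by omega)]

lemma sum_ext (n L₁ L₂ : ℕ) (h1 : n+1 ≤ 2*L₁) (h2 : L₁ ≤ L₂) :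
    ∑ k ∈ range L₁, t n k = ∑ k ∈ range L₂, t n k := by
  apply (sum_subset (range_subset_range.2 h2) _)
  intro k _ hk
  rw [mem_range, not_lt] at hk
  exact t_zero n k (by omega)

lemma sum_step (n L : ℕ) (hL : n + 3 ≤ 2*L) :
    ∑ k ∈ range L, t (n+2) k
      = (1 + q^(n+2)) * x * ∑ k ∈ range L, t (n+1) k
        + q^(n+1) * s * ∑ k ∈ range L, t n k := by
  rw [mul_sum, mul_sum]
  have h1 : ∀ k ∈ range L, q^(n+1) * s * t n k = aa n (k+1) - bb n k :=
    fun k _ => sAB n k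
  rw [sum_congr rfl h1, sum_sub_distrib]
  have h2 : ∑ k ∈ range L, aa n (k+1) = ∑ k ∈ range L, aa n k := by
    have := sum_range_succ' (aa n) L
    rw [sum_range_succ (aa n) L] at this
    have ha0 : aa n 0 = 0 := rfl
    have haL : aa n L = 0 := aa_zero n L (by omega)
    rw [ha0, haL, add_zero, add_zero] at this
    exact this.symm
  rw [h2]
  have h3 : ∀ k ∈ range L, t (n+2) k = (1 + q^(n+2)) * x * t (n+1) k + aa n k - bb n k :=
    fun k _ => by linear_combination perk n k
  rw [sum_congr rfl h3]
  rw [sum_sub_distrib, sum_add_distrib]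
  ring

lemma key : ∀ n, chebU n = ∑ k ∈ range (n+2), t n k
  | 0 => by
    rw [show (0+2 : ℕ) = 2 from rfl, sum_range_succ, sum_range_succ, sum_range_zero]
    rw [t_zero 0 1 (by omega)]
    simp [chebU, t, gbinom, Pk]
  | 1 => by
    rw [show (1+2 : ℕ) = 3 from rfl, sum_range_succ, sum_range_succ, sum_range_succ,
      sum_range_zero, t_zero 1 1 (by omega), t_zero 1 2 (by omega)]
    simp only [chebU, t, Pk, range_zero, prod_empty]
    rw [show (1 : ℕ) - 2*0 = 1 from rfl, show 2*0+1 = 1 from rfl]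
    simp [gbinom]
  | (n+2) => by
    have h1 := key (n+1)
    have h0 := key n
    rw [show chebU (n+2) = (1 + q^(n+2)) * x * chebU (n+1) + q^(n+1) * s * chebU n from rfl,
      h1, h0,
      sum_ext (n+1) (n+3) (n+4) (by omega) (by omega),
      sum_ext n (n+2) (n+4) (by omega) (by omega)]
    exact (sum_step n (n+4) (by omega)).symm

/-- Binet-type formula for the q-Chebyshev polynomials of the second kind.
(For odd `n` the boundary term `k = (n+1)/2` vanishes since `[n+1 choose n+2]_q = 0`.) -/
theorem chebU_binet (n : ℕ) :
    chebU n = ∑ k ∈ range ((n + 1) / 2 + 1),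
      q ^ Nat.choose (n - 2 * k) 2 * gbinom (n + 1) (2 * k + 1) * x ^ (n - 2 * k) *
        ∏ j ∈ range k, (x ^ 2 + q ^ (2 * j + 1) * s) := by
  rw [key n]
  exact (sum_ext n ((n+1)/2+1) (n+2) (by omega) (by omega)).symm

end
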